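/- Let φ_E be a d × d nonnegative kernel with zero E^c columns and associated branching matrix α (entrywise L¹ norms). If ρ(α^{EE}) < 1, then the entrywise L¹ norms of Σ_{n=1}^∞ φ_E^{⊗n} are bounded above, entrywise, by the block matrix Ω = [[(I - α^{EE})⁻¹ - I, 0], [α^{E^cE}(I - α^{EE})⁻¹, 0]]. -/

import Mathlib

open MeasureTheory Matrix Filter

noncomputable def L1norm (f : ℝ → ℝ) : ℝ := ∫ t in Set.Ioi (0:ℝ), |f t|

noncomputable def conv (f g : ℝ → ℝ) : ℝ → ℝ := fun t => ∫ s in (0:ℝ)..t, f (t - s) * g s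

noncomputable def mconv {ι κ σ : Type*} [Fintype κ] (φ : Matrix ι κ (ℝ → ℝ))
    (ψ : Matrix κ σ (ℝ → ℝ)) : Matrix ι σ (ℝ → ℝ) :=
  Matrix.of fun i j t => ∑ k, ∫ s in (0:ℝ)..t, φ i k (t - s) * ψ k j s

noncomputable def mconvPow {ι : Type*} [Fintype ι] (φ : Matrix ι ι (ℝ → ℝ)) : ℕ → Matrix ι ι (ℝ → ℝ)
  | 0 => φ
  | n + 1 => mconv φ (mconvPow φ n)

noncomputable def specRad {ι : Type*} [Fintype ι] [DecidableEq ι] (A : Matrix ι ι ℝ) : ℝ :=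
  sSup ((fun z : ℂ => ‖z‖) '' spectrum ℂ (A.map Complex.ofReal))

noncomputable def specRadC {ι : Type*} [Fintype ι] [DecidableEq ι] (A : Matrix ι ι ℂ) : ℝ :=
  sSup ((fun z : ℂ => ‖z‖) '' spectrum ℂ A)

/-! ### Auxiliary measure-theoretic lemmas -/

lemma lint_param_meas (F G : ℝ → ENNReal) (hF : Measurable F) (hG : Measurable G) :
    Measurable fun t => ∫⁻ s in Set.Ioc 0 t, F (t - s) * G s := by
  have h : ∀ t : ℝ, (∫⁻ s in Set.Ioc 0 t, F (t - s) * G s)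
      = ∫⁻ s, ({p : ℝ × ℝ | 0 < p.2 ∧ p.2 ≤ p.1}.indicator
          (fun p => F (p.1 - p.2) * G p.2)) (t, s) := by
    intro t
    rw [← lintegral_indicator measurableSet_Ioc _]
    refine lintegral_congr fun s => ?_
    simp [Set.indicator_apply, Set.mem_Ioc]
  simp_rw [h]
  apply Measurable.lintegral_prod_right
  apply Measurable.indicator
  · exact ((hF.comp (measurable_fst.sub measurable_snd)).mul (hG.comp measurable_snd))
  · exact (measurableSet_lt measurable_const measurable_snd).inter
      (measurableSet_le measurable_snd measurable_fst)

lemma lint_young (F G : ℝ → ENNReal) (hF : Measurable F) (hG : Measurable G) :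
    (∫⁻ t in Set.Ioi 0, ∫⁻ s in Set.Ioc 0 t, F (t - s) * G s)
      ≤ (∫⁻ u in Set.Ioi 0, F u) * ∫⁻ u in Set.Ioi 0, G u := by
  have hWm : Measurable ({p : ℝ × ℝ | 0 < p.2 ∧ p.2 ≤ p.1}.indicator
      (fun p => F (p.1 - p.2) * G p.2)) := by
    apply Measurable.indicator
    · exact ((hF.comp (measurable_fst.sub measurable_snd)).mul (hG.comp measurable_snd))
    · exact (measurableSet_lt measurable_const measurable_snd).inter
        (measurableSet_le measurable_snd measurable_fst)
  have h1 : ∀ t : ℝ, (∫⁻ s in Set.Ioc 0 t, F (t - s) * G s)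
      = ∫⁻ s, ({p : ℝ × ℝ | 0 < p.2 ∧ p.2 ≤ p.1}.indicator
          (fun p => F (p.1 - p.2) * G p.2)) (t, s) := by
    intro t
    rw [← lintegral_indicator measurableSet_Ioc _]
    refine lintegral_congr fun s => ?_
    simp [Set.indicator_apply, Set.mem_Ioc]
  have h2 : ∀ s : ℝ, (∫⁻ t, ({p : ℝ × ℝ | 0 < p.2 ∧ p.2 ≤ p.1}.indicator
          (fun p => F (p.1 - p.2) * G p.2)) (t, s))
      = (Set.Ioi (0:ℝ)).indicator (fun s => G s * ∫⁻ u in Set.Ioi 0, F u) s := by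
    intro s
    by_cases hs : 0 < s
    · have e1 : ∀ t : ℝ, ({p : ℝ × ℝ | 0 < p.2 ∧ p.2 ≤ p.1}.indicator
          (fun p => F (p.1 - p.2) * G p.2)) (t, s)
          = (Set.Ici (0:ℝ)).indicator F (t + -s) * G s := by
        intro t
        by_cases ht : s ≤ t
        · rw [Set.indicator_of_mem (by exact ⟨hs, ht⟩),
            Set.indicator_of_mem (by simp only [Set.mem_Ici]; linarith)]
          simp [sub_eq_add_neg]
        · rw [Set.indicator_of_notMem (by simp [ht]),
            Set.indicator_of_notMem (by simp only [Set.mem_Ici]; intro h; exact ht (by linarith)),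
            zero_mul]
      simp_rw [e1]
      rw [lintegral_mul_const _ (show Measurable fun t : ℝ => (Set.Ici (0:ℝ)).indicator F (t + -s)
          from (hF.indicator measurableSet_Ici).comp (measurable_add_const (-s))),
        lintegral_add_right_eq_self ((Set.Ici (0:ℝ)).indicator F) (-s),
        lintegral_indicator measurableSet_Ici _,
        Set.indicator_of_mem (by exact hs)]
      have : (∫⁻ u in Set.Ici (0:ℝ), F u) = ∫⁻ u in Set.Ioi (0:ℝ), F u := by
        rw [← Set.Ioi_union_left, lintegral_union (by simp) (by simp)]
        simp
      rw [this]; ring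
    · have e0 : ∀ t : ℝ, ({p : ℝ × ℝ | 0 < p.2 ∧ p.2 ≤ p.1}.indicator
          (fun p => F (p.1 - p.2) * G p.2)) (t, s) = 0 := by
        intro t
        exact Set.indicator_of_notMem (fun h => hs h.1) _
      simp_rw [e0]
      rw [lintegral_zero, Set.indicator_of_notMem (by simpa using hs)]
  calc (∫⁻ t in Set.Ioi 0, ∫⁻ s in Set.Ioc 0 t, F (t - s) * G s)
      ≤ ∫⁻ t, ∫⁻ s in Set.Ioc 0 t, F (t - s) * G s := setLIntegral_le_lintegral _ _
    _ = ∫⁻ t, ∫⁻ s, ({p : ℝ × ℝ | 0 < p.2 ∧ p.2 ≤ p.1}.indicator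
          (fun p => F (p.1 - p.2) * G p.2)) (t, s) := by simp_rw [h1]
    _ = ∫⁻ s, ∫⁻ t, ({p : ℝ × ℝ | 0 < p.2 ∧ p.2 ≤ p.1}.indicator
          (fun p => F (p.1 - p.2) * G p.2)) (t, s) := lintegral_lintegral_swap hWm.aemeasurable
    _ ≤ (∫⁻ u in Set.Ioi 0, F u) * ∫⁻ u in Set.Ioi 0, G u := by
        simp_rw [h2]
        rw [lintegral_indicator measurableSet_Ioi _, lintegral_mul_const _ hG]
        rw [mul_comm]

lemma meas_param (g : ℝ → ℝ → ℝ) (hg : Measurable fun p : ℝ × ℝ => g p.1 p.2) :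
    Measurable fun t => ∫ s in (0:ℝ)..t, g t s := by
  have h : ∀ t : ℝ, (∫ s in (0:ℝ)..t, g t s)
      = (∫ s, ({p : ℝ × ℝ | p.2 ∈ Set.Ioc 0 p.1}.indicator (fun p => g p.1 p.2)) (t, s))
        - ∫ s, ({p : ℝ × ℝ | p.2 ∈ Set.Ioc p.1 0}.indicator (fun p => g p.1 p.2)) (t, s) := by
    intro t
    show (∫ s in Set.Ioc 0 t, g t s) - (∫ s in Set.Ioc t 0, g t s) = _
    congr 1
    · rw [← integral_indicator measurableSet_Ioc]
      refine integral_congr_ae (Filter.Eventually.of_forall fun s => ?_)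
      simp [Set.indicator_apply]
    · rw [← integral_indicator measurableSet_Ioc]
      refine integral_congr_ae (Filter.Eventually.of_forall fun s => ?_)
      simp [Set.indicator_apply]
  simp_rw [h]
  have hs1 : MeasurableSet {p : ℝ × ℝ | p.2 ∈ Set.Ioc 0 p.1} := by
    apply (measurableSet_lt measurable_const measurable_snd).inter
      (measurableSet_le measurable_snd measurable_fst)
  have hs2 : MeasurableSet {p : ℝ × ℝ | p.2 ∈ Set.Ioc p.1 0} := by
    apply (measurableSet_lt measurable_fst measurable_snd).inter
      (measurableSet_le measurable_snd measurable_const)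
  exact ((((hg.indicator hs1).stronglyMeasurable.integral_prod_right').measurable).sub
    (((hg.indicator hs2).stronglyMeasurable.integral_prod_right').measurable))

/-! ### Auxiliary matrix lemmas -/

attribute [local instance] Matrix.linftyOpNormedAddCommGroup Matrix.linftyOpNormedRing
  Matrix.linftyOpNormedAlgebra

section spec
variable {e : ℕ}

instance : CompleteSpace (Matrix (Fin e) (Fin e) ℂ) :=
  inferInstanceAs (CompleteSpace (Fin e → Fin e → ℂ))

lemma entry_le_norm (M : Matrix (Fin e) (Fin e) ℂ) (i j : Fin e) : ‖M i j‖ ≤ ‖M‖ := by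
  rw [Matrix.linfty_opNorm_def]
  calc ‖M i j‖ ≤ ((∑ k, ‖M i k‖₊ : NNReal) : ℝ) := by
        push_cast
        exact Finset.single_le_sum (f := fun k => ‖M i k‖) (fun k _ => norm_nonneg _)
          (Finset.mem_univ j)
      _ ≤ _ := by
        norm_cast
        exact Finset.le_sup (f := fun i => ∑ j, ‖M i j‖₊) (Finset.mem_univ i)

lemma summable_norm_pow (A : Matrix (Fin e) (Fin e) ℝ) (hA : specRad A < 1) :
    Summable fun n : ℕ => ‖(A.map Complex.ofReal) ^ n‖ := by
  set B := A.map Complex.ofReal with hB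
  have hrad : spectralRadius ℂ B < 1 := by
    have hbdd : BddAbove ((fun z : ℂ => ‖z‖) '' spectrum ℂ B) :=
      ((spectrum.isCompact B).image continuous_norm).bddAbove
    have hle : ∀ k ∈ spectrum ℂ B, (‖k‖₊ : ENNReal) ≤ ENNReal.ofReal (specRad A) := by
      intro k hk
      have : ‖k‖ ≤ specRad A := le_csSup hbdd ⟨k, hk, rfl⟩
      simpa [← ENNReal.ofReal_coe_nnreal] using ENNReal.ofReal_le_ofReal this
    calc spectralRadius ℂ B ≤ ENNReal.ofReal (specRad A) := iSup₂_le hle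
      _ < 1 := by
        rw [show (1 : ENNReal) = ENNReal.ofReal 1 by simp]
        exact (ENNReal.ofReal_lt_ofReal_iff one_pos).mpr hA
  obtain ⟨r, hr0, hr1, hr2⟩ := ENNReal.lt_iff_exists_real_btwn.mp hrad
  have hr1' : r < 1 := by
    have := hr2
    rw [show (1 : ENNReal) = ENNReal.ofReal 1 by simp, ENNReal.ofReal_lt_ofReal_iff one_pos] at this
    exact this
  have hev : ∀ᶠ n : ℕ in atTop, (‖B ^ n‖₊ : ENNReal) ^ (1 / (n:ℝ)) < ENNReal.ofReal r :=
    (spectrum.pow_nnnorm_pow_one_div_tendsto_nhds_spectralRadius B).eventually_lt_const hr1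
  have hev2 : ∀ᶠ n : ℕ in atTop, ‖B ^ n‖ ≤ r ^ n := by
    filter_upwards [hev, eventually_ge_atTop 1] with n hn hn1
    have hne : (n : ℝ) ≠ 0 := by positivity
    have h1 : ((‖B ^ n‖₊ : ENNReal) ^ (1 / (n:ℝ))) ^ (n:ℝ) ≤ (ENNReal.ofReal r) ^ (n:ℝ) :=
      ENNReal.rpow_le_rpow hn.le (by positivity)
    rw [← ENNReal.rpow_mul, one_div, inv_mul_cancel₀ hne, ENNReal.rpow_one] at h1
    have h2 : (‖B ^ n‖₊ : ENNReal) ≤ ENNReal.ofReal (r ^ (n:ℝ)) := by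
      rw [← ENNReal.ofReal_rpow_of_nonneg hr0 (Nat.cast_nonneg n)]; exact h1
    have := ENNReal.toReal_mono (by simp [ENNReal.ofReal_ne_top]) h2
    rw [ENNReal.coe_toReal, ENNReal.toReal_ofReal (by positivity)] at this
    calc ‖B ^ n‖ = (‖B ^ n‖₊ : ℝ) := rfl
      _ ≤ r ^ (n:ℝ) := this
      _ = r ^ n := by rw [Real.rpow_natCast]
  obtain ⟨N, hN⟩ := eventually_atTop.mp hev2
  have : Summable fun n : ℕ => ‖B ^ (n + N)‖ := by
    apply Summable.of_nonneg_of_le (fun n => norm_nonneg _) (fun n => hN (n + N) (by omega))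
    exact ((summable_geometric_of_lt_one (by linarith) hr1').mul_left (r ^ N)).congr
      (fun n => by rw [← pow_add]; ring)
  exact (summable_nat_add_iff N).mp this

end spec

section neumann
variable {e : ℕ}

lemma summable_entry (A : Matrix (Fin e) (Fin e) ℝ) (hA : specRad A < 1) (i j : Fin e) :
    Summable fun n : ℕ => (A ^ n) i j := by
  apply Summable.of_norm_bounded (summable_norm_pow A hA)
  intro n
  have h : ((A ^ n).map Complex.ofReal) = (A.map Complex.ofReal) ^ n := by
    exact map_pow (Complex.ofRealHom.mapMatrix (m := Fin e)) A n
  calc ‖(A ^ n) i j‖ = ‖((A ^ n).map Complex.ofReal) i j‖ := by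
        simp [Matrix.map_apply, Complex.norm_real]
    _ = ‖((A.map Complex.ofReal) ^ n) i j‖ := by rw [h]
    _ ≤ ‖(A.map Complex.ofReal) ^ n‖ := entry_le_norm _ i j

lemma pow_entry_nonneg {ι : Type*} [Fintype ι] [DecidableEq ι] (A : Matrix ι ι ℝ)
    (hnn : ∀ i j, 0 ≤ A i j) : ∀ n i j, 0 ≤ (A ^ n) i j := by
  intro n
  induction n with
  | zero => intro i j; by_cases h : i = j <;> simp [h, Matrix.one_apply]
  | succ n ih =>
    intro i j
    rw [pow_succ, Matrix.mul_apply]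
    exact Finset.sum_nonneg fun k _ => mul_nonneg (ih i k) (hnn k j)

lemma neumann_tsum (A : Matrix (Fin e) (Fin e) ℝ) (hA : specRad A < 1) :
    ∀ i j, (1 - A)⁻¹ i j = ∑' n : ℕ, (A ^ n) i j := by
  have hS : ∀ i j, Summable fun n : ℕ => (A ^ n) i j := summable_entry A hA
  set S : Matrix (Fin e) (Fin e) ℝ := Matrix.of fun i j => ∑' n : ℕ, (A ^ n) i j with hSdef
  have key : (1 - A) * S = 1 := by
    ext i j
    rw [Matrix.sub_mul, Matrix.one_mul, Matrix.sub_apply, Matrix.mul_apply]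
    have h1 : ∀ k, A i k * S k j = ∑' n : ℕ, A i k * (A ^ n) k j := by
      intro k; rw [hSdef]; exact (tsum_mul_left).symm
    have h2 : (∑ k, A i k * S k j) = ∑' n : ℕ, ∑ k, A i k * (A ^ n) k j := by
      simp_rw [h1]
      exact (Summable.tsum_finsetSum (fun k _ => (hS k j).mul_left _)).symm
    have h3 : ∀ n : ℕ, (∑ k, A i k * (A ^ n) k j) = (A ^ (n+1)) i j := by
      intro n; rw [pow_succ']; rw [Matrix.mul_apply]
    rw [h2]
    simp_rw [h3]
    have h4 : S i j = (A ^ 0) i j + ∑' n : ℕ, (A ^ (n+1)) i j := by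
      rw [hSdef]; exact Summable.tsum_eq_zero_add (hS i j)
    have : S i j - ∑' n : ℕ, (A ^ (n+1)) i j = (A ^ 0) i j := by rw [h4]; ring
    rw [this]
    simp [Matrix.one_apply]
  intro i j
  rw [Matrix.inv_eq_right_inv key]; rfl

lemma partial_sum_pow_le (A : Matrix (Fin e) (Fin e) ℝ) (hA : specRad A < 1)
    (hnn : ∀ i j, 0 ≤ A i j) (N : ℕ) (i j : Fin e) :
    ∑ n ∈ Finset.range N, (A ^ n) i j ≤ (1 - A)⁻¹ i j := by
  rw [neumann_tsum A hA]
  exact Summable.sum_le_tsum (Finset.range N) (fun n _ => pow_entry_nonneg A hnn n i j) (summable_entry A hA i j)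

lemma partial_sum_pow_succ_le (A : Matrix (Fin e) (Fin e) ℝ) (hA : specRad A < 1)
    (hnn : ∀ i j, 0 ≤ A i j) (N : ℕ) (i j : Fin e) :
    ∑ n ∈ Finset.range N, (A ^ (n+1)) i j ≤ ((1 - A)⁻¹ - 1) i j := by
  have hS := summable_entry A hA i j
  have hS1 : Summable fun n : ℕ => (A ^ (n+1)) i j := by
    have := (summable_nat_add_iff 1).mpr hS
    simpa using this
  have h4 : (∑' n : ℕ, (A ^ n) i j) = (A ^ 0) i j + ∑' n : ℕ, (A ^ (n+1)) i j :=
    Summable.tsum_eq_zero_add hS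
  calc ∑ n ∈ Finset.range N, (A ^ (n+1)) i j
      ≤ ∑' n : ℕ, (A ^ (n+1)) i j :=
        Summable.sum_le_tsum (Finset.range N) (fun n _ => pow_entry_nonneg A hnn (n+1) i j) hS1
    _ = ((1 - A)⁻¹ - 1) i j := by
        rw [Matrix.sub_apply, neumann_tsum A hA i j, h4]
        simp [Matrix.one_apply]

end neumann

theorem stmt8 (e m : ℕ) (α : Matrix (Fin e ⊕ Fin m) (Fin e ⊕ Fin m) ℝ)
    (f : (Fin e ⊕ Fin m) → (Fin e ⊕ Fin m) → ℝ → ℝ)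
    (hα : ∀ i j, 0 ≤ α i j)
    (hf0 : ∀ i j t, 0 ≤ f i j t)
    (hfm : ∀ i j, Measurable (f i j))
    (hfi : ∀ i j, IntegrableOn (f i j) (Set.Ioi 0))
    (hf1 : ∀ i j, ∫ t in Set.Ioi (0:ℝ), f i j t = 1)
    (φE : Matrix (Fin e ⊕ Fin m) (Fin e ⊕ Fin m) (ℝ → ℝ))
    (hφEl : ∀ i k, φE i (Sum.inl k) = fun t => α i (Sum.inl k) * f i (Sum.inl k) t)
    (hφEr : ∀ i k, φE i (Sum.inr k) = 0)
    (αEE : Matrix (Fin e) (Fin e) ℝ) (hEE : αEE = Matrix.of fun i j => α (Sum.inl i) (Sum.inl j))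
    (αQ : Matrix (Fin m) (Fin e) ℝ) (hQ : αQ = Matrix.of fun i j => α (Sum.inr i) (Sum.inl j))
    (hspec : specRad αEE < 1) :
    ∀ i j, ∑' n : ℕ, L1norm (mconvPow φE n i j) ≤
      Matrix.fromBlocks ((1 - αEE)⁻¹ - 1) (0 : Matrix (Fin e) (Fin m) ℝ)
        (αQ * (1 - αEE)⁻¹) 0 i j := by
  classical
  set β : Matrix (Fin e ⊕ Fin m) (Fin e ⊕ Fin m) ℝ := Matrix.fromBlocks αEE 0 αQ 0 with hβdef
  -- basic facts about φE
  have hφnn : ∀ i k t, 0 ≤ φE i k t := by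
    intro i k t
    cases k with
    | inl k => rw [hφEl]; exact mul_nonneg (hα _ _) (hf0 _ _ _)
    | inr k => rw [hφEr]; exact le_refl _
  have hφm : ∀ i k, Measurable (φE i k) := by
    intro i k
    cases k with
    | inl k => rw [hφEl]; exact (hfm _ _).const_mul _
    | inr k => rw [hφEr]; exact measurable_const
  have hβnn : ∀ i k, 0 ≤ β i k := by
    rintro (i | i) (k | k)
    · rw [hβdef]; rw [hEE]; exact hα _ _
    · rw [hβdef]; exact le_refl _
    · rw [hβdef]; rw [hQ]; exact hα _ _
    · rw [hβdef]; exact le_refl _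
  have hφlint : ∀ i k, (∫⁻ t in Set.Ioi 0, ENNReal.ofReal (φE i k t)) = ENNReal.ofReal (β i k) := by
    intro i k
    cases k with
    | inl k =>
      rw [hφEl]
      have hc : 0 ≤ α i (Sum.inl k) := hα _ _
      calc (∫⁻ t in Set.Ioi 0, ENNReal.ofReal (α i (Sum.inl k) * f i (Sum.inl k) t))
          = ∫⁻ t in Set.Ioi 0, ENNReal.ofReal (α i (Sum.inl k)) * ENNReal.ofReal (f i (Sum.inl k) t) := by
            refine lintegral_congr fun t => ENNReal.ofReal_mul hc
        _ = ENNReal.ofReal (α i (Sum.inl k)) * ∫⁻ t in Set.Ioi 0, ENNReal.ofReal (f i (Sum.inl k) t) :=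
            lintegral_const_mul _ (ENNReal.measurable_ofReal.comp (hfm _ _))
        _ = ENNReal.ofReal (α i (Sum.inl k)) * ENNReal.ofReal (∫ t in Set.Ioi 0, f i (Sum.inl k) t) := by
            rw [← ofReal_integral_eq_lintegral_ofReal (hfi _ _)
              (Filter.Eventually.of_forall fun t => hf0 _ _ _)]
        _ = ENNReal.ofReal (β i (Sum.inl k)) := by
            rw [hf1]
            cases i with
            | inl i => simp [hβdef, hEE, ENNReal.ofReal_mul]
            | inr i => simp [hβdef, hQ, ENNReal.ofReal_mul]
    | inr k =>
      rw [hφEr]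
      cases i with
      | inl i => simp [hβdef]
      | inr i => simp [hβdef]
  -- nonnegativity of powers of β
  have hβpow_nn : ∀ n i k, 0 ≤ (β ^ n) i k := pow_entry_nonneg β hβnn
  -- the key induction
  have key : ∀ n : ℕ, (∀ i j, Measurable (mconvPow φE n i j)) ∧
      (∀ i j t, 0 ≤ t → 0 ≤ mconvPow φE n i j t) ∧
      (∀ i j, (∫⁻ t in Set.Ioi 0, ENNReal.ofReal (mconvPow φE n i j t))
        ≤ ENNReal.ofReal ((β ^ (n+1)) i j)) := by
    intro n
    induction n with
    | zero =>
      refine ⟨fun i j => hφm i j, fun i j t _ => hφnn i j t, fun i j => ?_⟩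
      rw [pow_one]
      exact le_of_eq (hφlint i j)
    | succ n ih =>
      obtain ⟨ihm, ihnn, ihle⟩ := ih
      have hunfold : ∀ i j, mconvPow φE (n+1) i j
          = fun t => ∑ k, ∫ s in (0:ℝ)..t, φE i k (t - s) * mconvPow φE n k j s := by
        intro i j; rfl
      have hGm : ∀ k j, Measurable fun s => ENNReal.ofReal (mconvPow φE n k j s) :=
        fun k j => ENNReal.measurable_ofReal.comp (ihm k j)
      have hFm : ∀ i k, Measurable fun u => ENNReal.ofReal (φE i k u) :=
        fun i k => ENNReal.measurable_ofReal.comp (hφm i k)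
      refine ⟨?_, ?_, ?_⟩
      · intro i j
        rw [hunfold]
        apply Finset.measurable_sum
        intro k _
        apply meas_param
        exact ((hφm i k).comp (measurable_fst.sub measurable_snd)).mul
          ((ihm k j).comp measurable_snd)
      · intro i j t ht
        rw [hunfold]
        apply Finset.sum_nonneg
        intro k _
        apply intervalIntegral.integral_nonneg ht
        intro u hu
        exact mul_nonneg (hφnn _ _ _) (ihnn k j u hu.1)
      · intro i j
        have hpt : ∀ t ∈ Set.Ioi (0:ℝ), ENNReal.ofReal (mconvPow φE (n+1) i j t)
            ≤ ∑ k, ∫⁻ s in Set.Ioc 0 t,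
                ENNReal.ofReal (φE i k (t - s)) * ENNReal.ofReal (mconvPow φE n k j s) := by
          intro t ht
          have ht' : (0:ℝ) ≤ t := le_of_lt ht
          have e1 : mconvPow φE (n+1) i j t
              = ∑ k, ∫ s in Set.Ioc (0:ℝ) t, φE i k (t - s) * mconvPow φE n k j s := by
            rw [hunfold]
            exact Finset.sum_congr rfl fun k _ => intervalIntegral.integral_of_le ht'
          rw [e1]
          have hterm_nn : ∀ k, 0 ≤ ∫ s in Set.Ioc (0:ℝ) t, φE i k (t - s) * mconvPow φE n k j s := by
            intro k
            apply setIntegral_nonneg measurableSet_Ioc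
            intro s hs
            exact mul_nonneg (hφnn _ _ _) (ihnn k j s hs.1.le)
          rw [ENNReal.ofReal_sum_of_nonneg (fun k _ => hterm_nn k)]
          refine Finset.sum_le_sum fun k _ => ?_
          by_cases hint : IntegrableOn (fun s => φE i k (t - s) * mconvPow φE n k j s) (Set.Ioc 0 t)
          · refine le_of_eq ?_
            calc ENNReal.ofReal (∫ s in Set.Ioc (0:ℝ) t, φE i k (t - s) * mconvPow φE n k j s)
                = ∫⁻ s in Set.Ioc (0:ℝ) t, ENNReal.ofReal (φE i k (t - s) * mconvPow φE n k j s) := by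
                  apply ofReal_integral_eq_lintegral_ofReal hint
                  apply (ae_restrict_iff' measurableSet_Ioc).2
                  exact Filter.Eventually.of_forall fun s hs =>
                    mul_nonneg (hφnn _ _ _) (ihnn k j s hs.1.le)
              _ = ∫⁻ s in Set.Ioc (0:ℝ) t,
                    ENNReal.ofReal (φE i k (t - s)) * ENNReal.ofReal (mconvPow φE n k j s) :=
                  lintegral_congr fun s => ENNReal.ofReal_mul (hφnn _ _ _)
          · rw [integral_undef hint]
            simp
        calc (∫⁻ t in Set.Ioi 0, ENNReal.ofReal (mconvPow φE (n+1) i j t))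
            ≤ ∫⁻ t in Set.Ioi 0, ∑ k, ∫⁻ s in Set.Ioc 0 t,
                ENNReal.ofReal (φE i k (t - s)) * ENNReal.ofReal (mconvPow φE n k j s) := by
              apply setLIntegral_mono
              · exact Finset.measurable_sum _ fun k _ => lint_param_meas _ _ (hFm i k) (hGm k j)
              · exact hpt
          _ = ∑ k, ∫⁻ t in Set.Ioi 0, ∫⁻ s in Set.Ioc 0 t,
                ENNReal.ofReal (φE i k (t - s)) * ENNReal.ofReal (mconvPow φE n k j s) :=
              lintegral_finset_sum _ fun k _ => lint_param_meas _ _ (hFm i k) (hGm k j)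
          _ ≤ ∑ k, (∫⁻ u in Set.Ioi 0, ENNReal.ofReal (φE i k u))
                * ∫⁻ s in Set.Ioi 0, ENNReal.ofReal (mconvPow φE n k j s) :=
              Finset.sum_le_sum fun k _ => lint_young _ _ (hFm i k) (hGm k j)
          _ ≤ ∑ k, ENNReal.ofReal (β i k) * ENNReal.ofReal ((β ^ (n+1)) k j) := by
              refine Finset.sum_le_sum fun k _ => ?_
              rw [hφlint i k]
              exact mul_le_mul_right (ihle k j) _
          _ = ENNReal.ofReal ((β ^ (n+1+1)) i j) := by
              rw [pow_succ' β (n+1), Matrix.mul_apply,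
                ENNReal.ofReal_sum_of_nonneg (fun k _ => mul_nonneg (hβnn i k) (hβpow_nn (n+1) k j))]
              exact Finset.sum_congr rfl fun k _ => (ENNReal.ofReal_mul (hβnn i k)).symm
  -- L1 norm bound for each n
  have hL1 : ∀ (n : ℕ) i j, L1norm (mconvPow φE n i j) ≤ (β ^ (n+1)) i j := by
    intro n i j
    obtain ⟨hm, hnn, hle⟩ := key n
    have h1 : L1norm (mconvPow φE n i j)
        = (∫⁻ t in Set.Ioi 0, ENNReal.ofReal |mconvPow φE n i j t|).toReal := by
      apply integral_eq_lintegral_of_nonneg_ae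
      · exact Filter.Eventually.of_forall fun t => abs_nonneg _
      · exact ((hm i j).abs).aestronglyMeasurable
    have h2 : (∫⁻ t in Set.Ioi 0, ENNReal.ofReal |mconvPow φE n i j t|)
        = ∫⁻ t in Set.Ioi 0, ENNReal.ofReal (mconvPow φE n i j t) := by
      apply setLIntegral_congr_fun measurableSet_Ioi
      exact fun t ht => by rw [abs_of_nonneg (hnn i j t (le_of_lt ht))]
    rw [h1, h2]
    calc (∫⁻ t in Set.Ioi 0, ENNReal.ofReal (mconvPow φE n i j t)).toReal
        ≤ (ENNReal.ofReal ((β ^ (n+1)) i j)).toReal :=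
          ENNReal.toReal_mono ENNReal.ofReal_ne_top (hle i j)
      _ = (β ^ (n+1)) i j := ENNReal.toReal_ofReal (hβpow_nn (n+1) i j)
  -- powers of β in block form
  have hβpow : ∀ n : ℕ, β ^ (n+1)
      = Matrix.fromBlocks (αEE ^ (n+1)) 0 (αQ * αEE ^ n) 0 := by
    intro n
    induction n with
    | zero => rw [pow_one, hβdef, pow_one, pow_zero, Matrix.mul_one]
    | succ n ih =>
      rw [pow_succ' β (n+1), ih, hβdef, Matrix.fromBlocks_multiply]
      simp [← pow_succ']
  have hαEEnn : ∀ i j, 0 ≤ αEE i j := by intro i j; rw [hEE]; exact hα _ _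
  have hαQnn : ∀ i j, 0 ≤ αQ i j := by intro i j; rw [hQ]; exact hα _ _
  -- conclusion
  intro i j
  apply Real.tsum_le_of_sum_range_le
  · intro n
    apply setIntegral_nonneg measurableSet_Ioi
    intro t _
    exact abs_nonneg _
  · intro N
    calc ∑ n ∈ Finset.range N, L1norm (mconvPow φE n i j)
        ≤ ∑ n ∈ Finset.range N, (β ^ (n+1)) i j :=
          Finset.sum_le_sum fun n _ => hL1 n i j
      _ ≤ Matrix.fromBlocks ((1 - αEE)⁻¹ - 1) (0 : Matrix (Fin e) (Fin m) ℝ)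
            (αQ * (1 - αEE)⁻¹) 0 i j := by
          rcases j with jl | jr
          · rcases i with il | ir
            · -- top-left block
              have : ∀ n, (β ^ (n+1)) (Sum.inl il) (Sum.inl jl) = (αEE ^ (n+1)) il jl := by
                intro n; rw [hβpow n]; rfl
              simp_rw [this]
              simpa using partial_sum_pow_succ_le αEE hspec hαEEnn N il jl
            · -- bottom-left block
              have hb : ∀ n, (β ^ (n+1)) (Sum.inr ir) (Sum.inl jl) = (αQ * αEE ^ n) ir jl := by
                intro n; rw [hβpow n]; rfl
              simp_rw [hb]
              have : ∑ n ∈ Finset.range N, (αQ * αEE ^ n) ir jl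
                  ≤ (αQ * (1 - αEE)⁻¹) ir jl := by
                rw [Matrix.mul_apply]
                have hswap : ∑ n ∈ Finset.range N, (αQ * αEE ^ n) ir jl
                    = ∑ k, αQ ir k * ∑ n ∈ Finset.range N, (αEE ^ n) k jl := by
                  simp_rw [Matrix.mul_apply, Finset.mul_sum]
                  rw [Finset.sum_comm]
                rw [hswap]
                refine Finset.sum_le_sum fun k _ => ?_
                exact mul_le_mul_of_nonneg_left (partial_sum_pow_le αEE hspec hαEEnn N k jl)
                  (hαQnn ir k)
              simpa using this
          · -- right blocks are zero
            have hz : ∀ n, (β ^ (n+1)) i (Sum.inr jr) = 0 := by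
              intro n
              rw [hβpow n]
              rcases i with il | ir <;> rfl
            simp_rw [hz]
            rcases i with il | ir <;> simp
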